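/- (Nondegeneracy at the transcritical bifurcation.) For the red coral model at λ* = c₂/(c₁(b·a)) and with v = a the right eigenvector of D_x f(λ*, 0) for eigenvalue 1, the second derivative of the first component of the model map at the origin in the direction (v, v) satisfies D_{xx}f₁(λ*, 0)[a, a] = (2(β − α)/Ω)·Σ_{k=2}^{13} p_k a_k, and this quantity is nonzero (indeed positive, since β > α); hence, with w the left eigenvector (w₁ = b·a, w₁₃ = b₁₃, w_k = b_k + S_k w_{k+1} for k = 2,…,12), wᵗ D_{xx}f(λ*, 0)[a, a] ≠ 0. -/

import Mathlib

noncomputable section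

open Real Finset Matrix

namespace RedCoral

/-- Survival rates `S₁,…,S₁₂` (1-based index; all other indices map to 0). -/
def Sr : ℕ → ℝ
  | 1 => 0.89
  | 2 => 0.63
  | 3 => 0.70
  | 4 => 0.52
  | 5 => 0.44
  | 6 => 0.29
  | 7 => 0.57
  | 8 => 0.33
  | 9 => 0.75
  | 10 => 1
  | 11 => 0.33
  | 12 => 1
  | _ => 0

/-- Fertility rates `F₁,…,F₁₃` (1-based index). -/
def Fert : ℕ → ℝ
  | 3 => 0.36
  | 4 => 0.64
  | 5 => 0.82
  | 6 => 0.97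
  | 7 => 0.98
  | 8 => 0.99
  | 9 => 1
  | 10 => 1
  | 11 => 1
  | 12 => 1
  | 13 => 1
  | _ => 0

/-- Birth rates `b_k = F_k k^{2.324}`. -/
def br (k : ℕ) : ℝ := Fert k * (k : ℝ) ^ (2.324 : ℝ)

/-- Polyps per colony `p_k = 1.239 k^{2.324}`. -/
def pr (k : ℕ) : ℝ := 1.239 * (k : ℝ) ^ (2.324 : ℝ)

def c1 : ℝ := 1.8e5
def c2 : ℝ := 1.3e7
def αr : ℝ := 5e-4
def βr : ℝ := 3.4e-3
def Ωr : ℝ := 36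

/-- Recruit function `φ(y) = c₁ e^{-αy} / (y² + c₂ e^{-βy})`. -/
def φr (y : ℝ) : ℝ := c1 * Real.exp (-αr * y) / (y ^ 2 + c2 * Real.exp (-βr * y))

/-- Polyp density `P(x) = (1/Ω) Σ_{k=2}^{13} p_k x_k` (0-based coordinates:
coordinate `i` is age group `i+1`). -/
def Pd (x : Fin 13 → ℝ) : ℝ :=
  (1 / Ωr) * ∑ i : Fin 13, if i.val = 0 then 0 else pr (i.val + 1) * x i

/-- The red coral model map `f : ℝ × ℝ¹³ → ℝ¹³`:
`f₁(λ,x) = λ φ(P(x)) Σ_k b_k x_k`, `f_{k+1}(λ,x) = S_k x_k`. -/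
def fc (lam : ℝ) (x : Fin 13 → ℝ) : Fin 13 → ℝ := fun i =>
  if _h : i.val = 0 then lam * φr (Pd x) * ∑ j : Fin 13, br (j.val + 1) * x j
  else Sr i.val * x ⟨i.val - 1, by have := i.isLt; omega⟩

/-- Cumulative survival `a₁ = 1`, `a_k = ∏_{i=1}^{k-1} S_i` (here `ar k` is the
1-based `a_{k+1}`, i.e. `ar k = ∏_{j=1}^{k} S_j`, so the 0-based coordinate `i`
carries `a_{i+1} = ar i`). -/
def ar (k : ℕ) : ℝ := ∏ j ∈ Finset.Icc 1 k, Sr j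

/-- `b·a = Σ_{k=1}^{13} a_k b_k`. -/
def ba : ℝ := ∑ i : Fin 13, ar i.val * br (i.val + 1)

/-- `Σ_{k=2}^{13} p_k a_k`. -/
def sumPA : ℝ := ∑ i : Fin 13, if i.val = 0 then 0 else pr (i.val + 1) * ar i.val

/-- The vector `a = (a₁,…,a₁₃)`. -/
def avec : Fin 13 → ℝ := fun i => ar i.val

/-- The Leslie matrix `D_x f(λ,0)`: first row `λ (c₁/c₂) b_j`, subdiagonal
`S₁,…,S₁₂`, all other entries zero. -/
def Jmat (lam : ℝ) : Matrix (Fin 13) (Fin 13) ℝ := Matrix.of fun i j =>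
  if i.val = 0 then lam * (c1 / c2) * br (j.val + 1)
  else if j.val + 1 = i.val then Sr i.val else 0


lemma Sr_nonneg (n : ℕ) : 0 ≤ Sr n := by unfold Sr; split <;> norm_num
lemma ar_nonneg (k : ℕ) : 0 ≤ ar k := Finset.prod_nonneg fun j _ => Sr_nonneg j
lemma br_nonneg (k : ℕ) : 0 ≤ br k := by
  apply mul_nonneg _ (Real.rpow_nonneg (Nat.cast_nonneg k) _)
  unfold Fert; split <;> norm_num
lemma ar_pos {k : ℕ} (hk : k ≤ 12) : 0 < ar k := by
  apply Finset.prod_pos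
  intro j hj
  simp only [Finset.mem_Icc] at hj
  obtain ⟨h1, h2⟩ := hj
  have h3 : j ≤ 12 := h2.trans hk
  interval_cases j <;> norm_num [Sr]
lemma ba_pos : 0 < ba := by
  apply Finset.sum_pos' (fun i _ => mul_nonneg (ar_nonneg _) (br_nonneg _))
  refine ⟨⟨2, by norm_num⟩, Finset.mem_univ _, ?_⟩
  apply mul_pos (ar_pos (by norm_num))
  have : (0:ℝ) < (3:ℝ) ^ (2.324:ℝ) := Real.rpow_pos_of_pos (by norm_num) _
  simp only [br]
  norm_num [Fert]
  positivity
lemma sumPA_pos : 0 < sumPA := by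
  apply Finset.sum_pos'
  · intro i _
    split
    · exact le_refl 0
    · exact mul_nonneg (mul_nonneg (by norm_num) (Real.rpow_nonneg (Nat.cast_nonneg _) _)) (ar_nonneg _)
  · refine ⟨⟨1, by norm_num⟩, Finset.mem_univ _, ?_⟩
    rw [if_neg (by norm_num)]
    exact mul_pos (mul_pos (by norm_num [pr]) (Real.rpow_pos_of_pos (by norm_num) _)) (ar_pos (by norm_num))

lemma hexp (a t : ℝ) : HasDerivAt (fun t => Real.exp (-a*t)) (-a * Real.exp (-a*t)) t := by
  simpa [mul_comm] using (((hasDerivAt_id t).const_mul (-a)).exp)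

lemma key (s : ℝ) :
    iteratedDeriv 2 (fun t : ℝ => c2 * t * Real.exp (-(αr*s)*t) /
      (s^2*t^2 + c2*Real.exp (-(βr*s)*t))) 0 = 2*(βr-αr)*s := by
  have hc2 : (0:ℝ) < c2 := by norm_num [c2]
  have hDpos : ∀ t : ℝ, 0 < s^2*t^2 + c2*Real.exp (-(βr*s)*t) := fun t => by positivity
  have hN : ∀ t : ℝ, HasDerivAt (fun t : ℝ => c2 * t * Real.exp (-(αr*s)*t))
      (c2 * Real.exp (-(αr*s)*t) + c2*t*(-(αr*s) * Real.exp (-(αr*s)*t))) t := by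
    intro t
    have h1 : HasDerivAt (fun t : ℝ => c2 * t) c2 t := by
      simpa using (hasDerivAt_id t).const_mul c2
    exact h1.mul (hexp (αr*s) t)
  have hD : ∀ t : ℝ, HasDerivAt (fun t : ℝ => s^2*t^2 + c2*Real.exp (-(βr*s)*t))
      (s^2*(2*t) + c2*(-(βr*s) * Real.exp (-(βr*s)*t))) t := by
    intro t
    have h1 : HasDerivAt (fun t : ℝ => s^2*t^2) (s^2*(2*t)) t := by
      have := (hasDerivAt_pow 2 t).const_mul (s^2)
      exact this.congr_deriv (by norm_num)
    exact h1.add ((hexp (βr*s) t).const_mul c2)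
  have hg : deriv (fun t : ℝ => c2 * t * Real.exp (-(αr*s)*t) /
      (s^2*t^2 + c2*Real.exp (-(βr*s)*t)))
      = fun t : ℝ => ((c2 * Real.exp (-(αr*s)*t) + c2*t*(-(αr*s) * Real.exp (-(αr*s)*t))) *
          (s^2*t^2 + c2*Real.exp (-(βr*s)*t)) -
        (c2 * t * Real.exp (-(αr*s)*t)) * (s^2*(2*t) + c2*(-(βr*s) * Real.exp (-(βr*s)*t)))) /
        (s^2*t^2 + c2*Real.exp (-(βr*s)*t))^2 :=
    funext fun t => ((hN t).div (hD t) (hDpos t).ne').deriv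
  rw [iteratedDeriv_succ, iteratedDeriv_one, hg]
  have hN' : HasDerivAt (fun t : ℝ => c2 * Real.exp (-(αr*s)*t) + c2*t*(-(αr*s) * Real.exp (-(αr*s)*t)))
      (c2 * (-(αr*s) * Real.exp (-(αr*s)*0)) +
        (c2 * (-(αr*s) * Real.exp (-(αr*s)*0)) + c2*0*(-(αr*s) * (-(αr*s) * Real.exp (-(αr*s)*0))))) 0 := by
    have h1 : HasDerivAt (fun t : ℝ => c2 * t) c2 0 := by
      simpa using (hasDerivAt_id (0:ℝ)).const_mul c2
    exact ((hexp (αr*s) 0).const_mul c2).add (h1.mul ((hexp (αr*s) 0).const_mul (-(αr*s)))) |>.congr_deriv (by ring)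
  have hD' : HasDerivAt (fun t : ℝ => s^2*(2*t) + c2*(-(βr*s) * Real.exp (-(βr*s)*t)))
      (s^2*2 + c2*(-(βr*s) * (-(βr*s) * Real.exp (-(βr*s)*0)))) 0 := by
    have h1 : HasDerivAt (fun t : ℝ => s^2*(2*t)) (s^2*2) 0 := by
      have := ((hasDerivAt_id (0:ℝ)).const_mul 2).const_mul (s^2)
      exact this.congr_deriv (by norm_num)
    exact h1.add (((hexp (βr*s) 0).const_mul (-(βr*s))).const_mul c2)
  have hA := (hN'.mul (hD 0)).sub ((hN 0).mul hD')
  have hB := (hD 0).pow 2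
  have hh := hA.div hB (pow_ne_zero 2 (hDpos 0).ne')
  refine Eq.trans hh.deriv ?_
  simp only [Pi.pow_apply, Pi.sub_apply, Pi.mul_apply]
  have e0 : Real.exp (-(αr*s)*0) = 1 := by norm_num
  have e1 : Real.exp (-(βr*s)*0) = 1 := by norm_num
  rw [e0, e1] at *
  field_simp
  ring

lemma Pd_smul (t : ℝ) : Pd (t • avec) = t * Pd avec := by
  have h : ∑ i : Fin 13, (if i.val = 0 then (0:ℝ) else pr (i.val+1) * (t * avec i))
      = t * ∑ i : Fin 13, (if i.val = 0 then (0:ℝ) else pr (i.val+1) * avec i) := by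
    rw [Finset.mul_sum]
    exact Finset.sum_congr rfl fun i _ => by split <;> ring
  simp only [Pd, Pi.smul_apply, smul_eq_mul, h]
  ring

lemma Pd_avec : Pd avec = (1/Ωr) * sumPA := rfl

lemma secondDeriv_linear (c : ℝ) : iteratedDeriv 2 (fun t : ℝ => c * t) 0 = 0 := by
  rw [iteratedDeriv_succ, iteratedDeriv_one]
  have h : deriv (fun t : ℝ => c * t) = fun _ => c := by
    funext t
    simpa using ((hasDerivAt_id t).const_mul c).deriv
  rw [h, deriv_const]

lemma main_component :
    iteratedDeriv 2 (fun t : ℝ => fc (c2 / (c1 * ba)) (t • avec) 0) 0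
      = (2 * (βr - αr) / Ωr) * sumPA := by
  set s : ℝ := Pd avec with hs
  have hba : ba ≠ 0 := ba_pos.ne'
  have hc1 : c1 ≠ 0 := by norm_num [c1]
  have hfun : (fun t : ℝ => fc (c2 / (c1 * ba)) (t • avec) 0)
      = fun t : ℝ => c2 * t * Real.exp (-(αr*s)*t) / (s^2*t^2 + c2*Real.exp (-(βr*s)*t)) := by
    funext t
    have hsum : ∑ j : Fin 13, br (j.val + 1) * (t • avec) j = t * ba := by
      rw [ba, Finset.mul_sum]
      exact Finset.sum_congr rfl fun j _ => by show br (j.val + 1) * (t * ar j.val) = t * (ar j.val * br (j.val + 1)); ring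
    have hP : Pd (t • avec) = s * t := by rw [Pd_smul]; ring
    rw [show fc (c2 / (c1 * ba)) (t • avec) 0
        = (c2 / (c1 * ba)) * φr (Pd (t • avec)) * ∑ j : Fin 13, br (j.val + 1) * (t • avec) j
        from rfl, hsum, hP, φr]
    have hD : (0:ℝ) < (s*t)^2 + c2 * Real.exp (-βr * (s*t)) := by
      have : (0:ℝ) < c2 := by norm_num [c2]
      positivity
    have ea : -(αr*s)*t = -αr * (s*t) := by ring
    have eb : -(βr*s)*t = -βr * (s*t) := by ring
    have ec : s^2*t^2 = (s*t)^2 := by ring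
    rw [ea, eb, ec]
    have hx : c1 * ba ≠ 0 := mul_ne_zero hc1 hba
    rw [show c2 / (c1 * ba) * (c1 * Real.exp (-αr * (s * t)) /
        ((s * t) ^ 2 + c2 * Real.exp (-βr * (s * t)))) * (t * ba)
        = c2 * t * Real.exp (-αr * (s * t)) / ((s * t) ^ 2 + c2 * Real.exp (-βr * (s * t)))
          * ((c1 * ba) / (c1 * ba)) from by ring, div_self hx, mul_one]
  rw [hfun, key s]
  rw [hs, Pd_avec]
  rw [show Ωr = (36:ℝ) from rfl]
  ring

/-- nondegeneracy at the transcritical bifurcation: at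
`λ* = c₂/(c₁(b·a))` and with `v = a` the right eigenvector,
`D_{xx}f₁(λ*,0)[a,a]` — the second derivative at `t = 0` of
`t ↦ f₁(λ*, t a)` — equals `(2(β-α)/Ω) Σ_{k=2}^{13} p_k a_k`, which is
positive (since `β > α`); hence with `w` the left eigenvector,
`wᵗ D_{xx}f(λ*,0)[a,a] ≠ 0`. -/
theorem red_coral_nondegeneracy (w : Fin 13 → ℝ)
    (h0 : w 0 = ba) (h12 : w 12 = br 13)
    (hrec : ∀ i : Fin 13, 1 ≤ i.val → i.val ≤ 11 →
      w i = br (i.val + 1) + Sr (i.val + 1) * w (i + 1)) :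
    iteratedDeriv 2 (fun t : ℝ => fc (c2 / (c1 * ba)) (t • avec) 0) 0
        = (2 * (βr - αr) / Ωr) * sumPA ∧
    0 < (2 * (βr - αr) / Ωr) * sumPA ∧
    ∑ i : Fin 13, w i *
        iteratedDeriv 2 (fun t : ℝ => fc (c2 / (c1 * ba)) (t • avec) i) 0 ≠ 0:= by
  have hmain := main_component
  have hpos : 0 < (2 * (βr - αr) / Ωr) * sumPA := by
    apply mul_pos _ sumPA_pos
    rw [show Ωr = (36:ℝ) from rfl, show βr = (3.4e-3:ℝ) from rfl, show αr = (5e-4:ℝ) from rfl]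
    norm_num
  refine ⟨hmain, hpos, ?_⟩
  have hzero : ∀ i : Fin 13, i ≠ 0 →
      iteratedDeriv 2 (fun t : ℝ => fc (c2 / (c1 * ba)) (t • avec) i) 0 = 0 := by
    intro i hi
    have hiv : i.val ≠ 0 := fun h => hi (Fin.ext h)
    have hfun : (fun t : ℝ => fc (c2 / (c1 * ba)) (t • avec) i)
        = fun t : ℝ => (Sr i.val * avec ⟨i.val - 1, by have := i.isLt; omega⟩) * t := by
      funext t
      rw [show fc (c2 / (c1 * ba)) (t • avec) i
          = Sr i.val * (t • avec) ⟨i.val - 1, by have := i.isLt; omega⟩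
          from dif_neg hiv]
      simp only [Pi.smul_apply, smul_eq_mul]
      ring
    rw [hfun, secondDeriv_linear]
  rw [Finset.sum_eq_single 0 (fun b _ hb => by rw [hzero b hb, mul_zero])
    (fun h => absurd (Finset.mem_univ 0) h)]
  rw [hmain, h0]
  exact mul_ne_zero ba_pos.ne' hpos.ne'


end RedCoral
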